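/- (Proposition 1: polynomial-system characterization of positive degeneracy criterion.) Fix m ≥ 1, 1 ≤ p ≤ m and θ ∈ Θ_{c_0}. For x = (x_1,…,x_m) ∈ [V]^m, indices 1 ≤ i_1 < ⋯ < i_p ≤ m and j_1,…,j_p ∈ [K], define ξ(i,j;θ,x) = ∫ ( Π_{i ∉ {i_1,…,i_p}} p_{θ,h}(x_i) ) · Π_{t=1}^p h_{j_t} dν_0(h). Then 𝔡_{m,p}(θ) > 0 if and only if the only δ = (δ_{jk})_{j∈[K],k∈[V]} ∈ ℝ^{K×V} satisfying both (i) Σ_{1≤i_1<⋯<i_p≤m} Σ_{j_1,…,j_p=1}^K ξ(i,j;θ,x) Π_{t=1}^p δ_{j_t, x_{i_t}} = 0 for every x ∈ [V]^m, and (ii) Σ_{k=1}^V δ_{jk} = 0 for every j ∈ [K], is δ = 0. -/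

import Mathlib

open MeasureTheory Filter

noncomputable section

namespace TopicModel

/-- The probability simplex in `ℝ^K`. -/
def simplex (K : ℕ) : Set (Fin K → ℝ) := {h | (∀ k, 0 ≤ h k) ∧ ∑ k, h k = 1}

/-- The parameter set `Θ_{c₀}`: `K` topic vectors, each a probability vector on `[V]`
with all entries at least `c₀`. -/
def Theta (c0 : ℝ) (V K : ℕ) : Set (Fin K → Fin V → ℝ) :=
  {θ | (∀ k ℓ, c0 ≤ θ k ℓ) ∧ ∀ k, ∑ ℓ, θ k ℓ = 1}

/-- `θ` is a tuple of probability vectors. -/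
def IsParam {V K : ℕ} (θ : Fin K → Fin V → ℝ) : Prop :=
  (∀ k ℓ, 0 ≤ θ k ℓ) ∧ ∀ k, ∑ ℓ, θ k ℓ = 1

/-- Word probability `p_{θ,h}(v) = Σ_k h_k θ_k(v)`. -/
def pWord {V K : ℕ} (θ : Fin K → Fin V → ℝ) (h : Fin K → ℝ) (v : Fin V) : ℝ :=
  ∑ k, h k * θ k v

/-- Document probability given mixing vector `h`: `p_{θ,h}(x) = Π_i p_{θ,h}(x_i)`. -/
def pDoc {V K : ℕ} (m : ℕ) (θ : Fin K → Fin V → ℝ) (h : Fin K → ℝ)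
    (x : Fin m → Fin V) : ℝ :=
  ∏ i, pWord θ h (x i)

/-- Marginal document probability `p_{θ,m}(x) = ∫ p_{θ,h}(x) dν₀(h)`. -/
def pM {V K : ℕ} (ν0 : Measure (Fin K → ℝ)) (m : ℕ) (θ : Fin K → Fin V → ℝ)
    (x : Fin m → Fin V) : ℝ :=
  ∫ h, pDoc m θ h x ∂ν0

/-- `ℓ¹`-norm of a `K × V` array: `‖δ‖₁ = Σ_k Σ_ℓ |δ_k(ℓ)|`. -/
def norm1 {V K : ℕ} (δ : Fin K → Fin V → ℝ) : ℝ := ∑ k, ∑ ℓ, |δ k ℓ|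

/-- Wasserstein distance between parameters:
`d_W(θ,θ') = min_π Σ_k ‖θ_k − θ'_{π(k)}‖₁`. -/
def dW {V K : ℕ} (θ θ' : Fin K → Fin V → ℝ) : ℝ :=
  ⨅ π : Equiv.Perm (Fin K), ∑ k, ∑ ℓ, |θ k ℓ - θ' (π k) ℓ|

/-- `L¹` distance between the document pmfs of two parameters. -/
def distL1 {V K : ℕ} (ν0 : Measure (Fin K → ℝ)) (m : ℕ)
    (θ θ' : Fin K → Fin V → ℝ) : ℝ :=
  ∑ x : Fin m → Fin V, |pM ν0 m θ x - pM ν0 m θ' x|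

/-- The `p`-th order degeneracy criterion `𝔡_{m,p}(θ)`: the infimum over all
`δ` with `‖δ‖₁ = 1` and `Σ_ℓ δ_k(ℓ) = 0` for every `k`, of
`Σ_{x ∈ [V]^m} |∫ p_{θ,h}(x) Σ_{i₁<⋯<i_p} Π_t (δ_h(x_{i_t}) / p_{θ,h}(x_{i_t})) dν₀|`. -/
def degen {V K : ℕ} (ν0 : Measure (Fin K → ℝ)) (m : ℕ) (θ : Fin K → Fin V → ℝ)
    (p : ℕ) : ℝ :=
  sInf {r : ℝ | ∃ δ : Fin K → Fin V → ℝ, norm1 δ = 1 ∧ (∀ k, ∑ ℓ, δ k ℓ = 0) ∧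
    r = ∑ x : Fin m → Fin V,
      |∫ h, pDoc m θ h x *
        ∑ S ∈ Finset.powersetCard p (Finset.univ : Finset (Fin m)),
          ∏ i ∈ S, ((∑ k, h k * δ k (x i)) / pWord θ h (x i)) ∂ν0|}

/-- The order of degeneracy `𝔭(m;θ) ∈ ℕ ∪ {∞}`:
the least `p ∈ {1,…,m}` with `𝔡_{m,p}(θ) > 0`, or `∞` if none exists. -/
def pOrder {V K : ℕ} (ν0 : Measure (Fin K → ℝ)) (m : ℕ) (θ : Fin K → Fin V → ℝ) : ℕ∞ :=
  sInf ((↑) '' {p : ℕ | 1 ≤ p ∧ p ≤ m ∧ 0 < degen ν0 m θ p})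

/-- Assumption (A2) on the mixing measure `ν₀`: a Borel probability measure supported on the
simplex, exchangeable, with `E[h₁²] > E[h₁h₂]` and (when `K ≥ 3`)
`E[h₁³] + 2E[h₁h₂h₃] > 3E[h₁²h₂]`. -/
structure NiceMixing (K : ℕ) (ν0 : Measure (Fin K → ℝ)) : Prop where
  prob : IsProbabilityMeasure ν0
  support : ν0 (simplex K)ᶜ = 0
  exch : ∀ π : Equiv.Perm (Fin K), Measure.map (fun h => h ∘ π) ν0 = ν0
  mom2 : ∀ i j : Fin K, i ≠ j → ∫ h, h i * h j ∂ν0 < ∫ h, h i ^ 2 ∂ν0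
  mom3 : ∀ i j k : Fin K, i ≠ j → j ≠ k → i ≠ k →
    3 * ∫ h, h i ^ 2 * h j ∂ν0 < ∫ h, h i ^ 3 ∂ν0 + 2 * ∫ h, h i * h j * h k ∂ν0

/-- The equivalence class `Θ̃_{c₀}(θ)` of parameters inducing the same document pmf as `θ`. -/
def equivClass {V K : ℕ} (ν0 : Measure (Fin K → ℝ)) (m : ℕ) (c0 : ℝ)
    (θ : Fin K → Fin V → ℝ) : Set (Fin K → Fin V → ℝ) :=
  {θ' | θ' ∈ Theta c0 V K ∧ ∀ x : Fin m → Fin V, pM ν0 m θ' x = pM ν0 m θ x}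

/-- Probability of the event `A` under `n` i.i.d. draws from the pmf `p` on a finite set. -/
def prodProb {α : Type*} [Fintype α] (p : α → ℝ) (n : ℕ) (A : Set (Fin n → α)) : ℝ :=
  ∑ xs : Fin n → α, A.indicator (fun ys => ∏ i, p (ys i)) xs

end TopicModel

namespace TopicModel


section AuxProp1
variable {V K m : ℕ} {c0 : ℝ} {θ : Fin K → Fin V → ℝ} {h : Fin K → ℝ}


lemma pWord_pos (hc0 : 0 < c0) (hθ : θ ∈ Theta c0 V K) (hh : h ∈ simplex K) (v : Fin V) :
    0 < pWord θ h v := by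
  have h1 : c0 = ∑ k, h k * c0 := by rw [← Finset.sum_mul, hh.2, one_mul]
  calc (0:ℝ) < c0 := hc0
    _ = ∑ k, h k * c0 := h1
    _ ≤ ∑ k, h k * θ k v :=
      Finset.sum_le_sum fun k _ => mul_le_mul_of_nonneg_left (hθ.1 k v) (hh.1 k)

lemma theta_le_one (hc0 : 0 < c0) (hθ : θ ∈ Theta c0 V K) (k : Fin K) (v : Fin V) :
    θ k v ≤ 1 := by
  have := Finset.single_le_sum (f := fun ℓ => θ k ℓ)
    (fun ℓ _ => le_trans hc0.le (hθ.1 k ℓ)) (Finset.mem_univ v)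
  rw [(hθ.2 k)] at this
  exact this

lemma simplex_le_one (hh : h ∈ simplex K) (k : Fin K) : h k ≤ 1 := by
  have := Finset.single_le_sum (f := fun j => h j) (fun j _ => hh.1 j) (Finset.mem_univ k)
  rw [hh.2] at this; exact this

lemma pWord_le_one (hc0 : 0 < c0) (hθ : θ ∈ Theta c0 V K) (hh : h ∈ simplex K) (v : Fin V) :
    pWord θ h v ≤ 1 := by
  calc pWord θ h v ≤ ∑ k, h k * 1 :=
        Finset.sum_le_sum fun k _ => mul_le_mul_of_nonneg_left (theta_le_one hc0 hθ k v) (hh.1 k)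
    _ = 1 := by simp [hh.2]

lemma pWord_nonneg (hc0 : 0 < c0) (hθ : θ ∈ Theta c0 V K) (hh : h ∈ simplex K) (v : Fin V) :
    0 ≤ pWord θ h v := (pWord_pos hc0 hθ hh v).le

lemma measurable_pWord (θ : Fin K → Fin V → ℝ) (v : Fin V) :
    Measurable fun h : Fin K → ℝ => pWord θ h v := by
  unfold pWord
  exact Finset.measurable_sum _ fun k _ => (measurable_pi_apply k).mul_const _


lemma pointwise_expand (p : ℕ) (x : Fin m → Fin V) (δ : Fin K → Fin V → ℝ)
    (hpos : ∀ v, 0 < pWord θ h v) :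
    pDoc m θ h x * ∑ S ∈ Finset.powersetCard p (Finset.univ : Finset (Fin m)),
        ∏ i ∈ S, ((∑ k, h k * δ k (x i)) / pWord θ h (x i))
    = ∑ S ∈ Finset.powersetCard p (Finset.univ : Finset (Fin m)),
        ∑ j : {i // i ∈ S} → Fin K,
          ((∏ i ∈ Sᶜ, pWord θ h (x i)) * ∏ i : {i // i ∈ S}, h (j i)) *
            ∏ i : {i // i ∈ S}, δ (j i) (x i.1) := by
  classical
  rw [Finset.mul_sum]
  refine Finset.sum_congr rfl fun S _ => ?_
  have h1 : pDoc m θ h x = (∏ i ∈ S, pWord θ h (x i)) * ∏ i ∈ Sᶜ, pWord θ h (x i) := by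
    rw [pDoc, Finset.prod_mul_prod_compl]
  have h2 : ∏ i ∈ S, ((∑ k, h k * δ k (x i)) / pWord θ h (x i))
      = (∏ i ∈ S, (∑ k, h k * δ k (x i))) / ∏ i ∈ S, pWord θ h (x i) :=
    Finset.prod_div_distrib _ _
  have h3 : (∏ i ∈ S, pWord θ h (x i)) ≠ 0 :=
    Finset.prod_ne_zero_iff.2 fun i _ => (hpos (x i)).ne'
  rw [h1, h2]
  rw [mul_comm (∏ i ∈ S, pWord θ h (x i)), mul_assoc,
    mul_div_cancel₀ _ h3]
  have h4 : (∏ i ∈ S, (∑ k, h k * δ k (x i)))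
      = ∑ j : {i // i ∈ S} → Fin K,
          (∏ i : {i // i ∈ S}, h (j i)) * ∏ i : {i // i ∈ S}, δ (j i) (x i.1) := by
    rw [← Finset.prod_coe_sort]
    rw [Finset.prod_univ_sum]
    rw [Fintype.piFinset_univ]  -- maybe needed
    refine Finset.sum_congr rfl fun j _ => ?_
    rw [Finset.prod_mul_distrib]
  rw [h4, Finset.mul_sum]
  refine Finset.sum_congr rfl fun j _ => by ring

lemma integrable_of_bdd (ν0 : Measure (Fin K → ℝ)) (hprob : IsProbabilityMeasure ν0) (hsupp : ν0 (simplex K)ᶜ = 0)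
    {f : (Fin K → ℝ) → ℝ} (hf : Measurable f) {C : ℝ} (hC : ∀ h ∈ simplex K, |f h| ≤ C) :
    Integrable f ν0 := by
  refine Integrable.mono' (integrable_const C) hf.aestronglyMeasurable ?_
  rw [ae_iff]
  refine measure_mono_null (fun g hg => ?_) hsupp
  intro hgs
  exact hg (by simpa [Real.norm_eq_abs] using hC g hgs)

lemma integrable_term (ν0 : Measure (Fin K → ℝ)) (hprob : IsProbabilityMeasure ν0) (hsupp : ν0 (simplex K)ᶜ = 0)
    (hc0 : 0 < c0) (hθ : θ ∈ Theta c0 V K) (x : Fin m → Fin V) (S : Finset (Fin m))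
    (j : {i // i ∈ S} → Fin K) :
    Integrable (fun h => (∏ i ∈ Sᶜ, pWord θ h (x i)) * ∏ i : {i // i ∈ S}, h (j i)) ν0 := by
  refine integrable_of_bdd ν0 hprob hsupp ?_ (C := 1) ?_
  · exact (Finset.measurable_prod _ fun i _ => measurable_pWord θ (x i)).mul
      (Finset.measurable_prod _ fun i _ => measurable_pi_apply _)
  · intro g hg
    rw [abs_mul]
    have hA : |∏ i ∈ Sᶜ, pWord θ g (x i)| ≤ 1 := by
      rw [abs_of_nonneg (Finset.prod_nonneg fun i _ => (pWord_pos hc0 hθ hg (x i)).le)]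
      exact Finset.prod_le_one (fun i _ => (pWord_pos hc0 hθ hg (x i)).le)
        (fun i _ => pWord_le_one hc0 hθ hg (x i))
    have hB : |∏ i : {i // i ∈ S}, g (j i)| ≤ 1 := by
      rw [abs_of_nonneg (Finset.prod_nonneg fun i _ => hg.1 (j i))]
      exact Finset.prod_le_one (fun i _ => hg.1 (j i)) (fun i _ => simplex_le_one hg (j i))
    calc |∏ i ∈ Sᶜ, pWord θ g (x i)| * |∏ i : {i // i ∈ S}, g (j i)| ≤ 1 * 1 :=
          mul_le_mul hA hB (abs_nonneg _) zero_le_one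
      _ = 1 := one_mul 1

lemma key_integral (ν0 : Measure (Fin K → ℝ)) (hprob : IsProbabilityMeasure ν0) (hsupp : ν0 (simplex K)ᶜ = 0)
    (hc0 : 0 < c0) (hθ : θ ∈ Theta c0 V K) (p : ℕ) (δ : Fin K → Fin V → ℝ)
    (x : Fin m → Fin V) :
    (∫ h, pDoc m θ h x * ∑ S ∈ Finset.powersetCard p (Finset.univ : Finset (Fin m)),
        ∏ i ∈ S, ((∑ k, h k * δ k (x i)) / pWord θ h (x i)) ∂ν0)
    = ∑ S ∈ Finset.powersetCard p (Finset.univ : Finset (Fin m)),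
        ∑ j : {i // i ∈ S} → Fin K,
          (∫ h, (∏ i ∈ Sᶜ, pWord θ h (x i)) * ∏ i : {i // i ∈ S}, h (j i) ∂ν0) *
            ∏ i : {i // i ∈ S}, δ (j i) (x i.1) := by
  classical
  have hae : ∀ᵐ h ∂ν0,
      pDoc m θ h x * ∑ S ∈ Finset.powersetCard p (Finset.univ : Finset (Fin m)),
          ∏ i ∈ S, ((∑ k, h k * δ k (x i)) / pWord θ h (x i))
      = ∑ S ∈ Finset.powersetCard p (Finset.univ : Finset (Fin m)),
          ∑ j : {i // i ∈ S} → Fin K,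
            ((∏ i ∈ Sᶜ, pWord θ h (x i)) * ∏ i : {i // i ∈ S}, h (j i)) *
              ∏ i : {i // i ∈ S}, δ (j i) (x i.1) := by
    rw [ae_iff]
    refine measure_mono_null (fun g hg => ?_) hsupp
    intro hgs
    exact hg (pointwise_expand p x δ fun v => pWord_pos hc0 hθ hgs v)
  rw [integral_congr_ae hae]
  rw [integral_finset_sum _ fun S _ => integrable_finset_sum _ fun j _ =>
    (integrable_term ν0 hprob hsupp hc0 hθ x S j).mul_const _]
  refine Finset.sum_congr rfl fun S _ => ?_
  rw [integral_finset_sum _ fun j _ => (integrable_term ν0 hprob hsupp hc0 hθ x S j).mul_const _]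
  exact Finset.sum_congr rfl fun j _ => integral_mul_const _ _

/-- The polynomial map appearing in Proposition 1. -/
def polyF (ν0 : Measure (Fin K → ℝ)) (m : ℕ) (θ : Fin K → Fin V → ℝ) (p : ℕ)
    (δ : Fin K → Fin V → ℝ) (x : Fin m → Fin V) : ℝ :=
  ∑ S ∈ Finset.powersetCard p (Finset.univ : Finset (Fin m)),
    ∑ j : {i // i ∈ S} → Fin K,
      (∫ h, (∏ i ∈ Sᶜ, pWord θ h (x i)) * ∏ i : {i // i ∈ S}, h (j i) ∂ν0) *
        ∏ i : {i // i ∈ S}, δ (j i) (x i.1)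

lemma continuous_polyF (ν0 : Measure (Fin K → ℝ)) (p : ℕ) (x : Fin m → Fin V) :
    Continuous fun δ : Fin K → Fin V → ℝ => polyF ν0 m θ p δ x := by
  refine continuous_finset_sum _ fun S _ => continuous_finset_sum _ fun j _ => ?_
  exact continuous_const.mul <| continuous_finset_prod _ fun i _ =>
    (continuous_apply (x i.1)).comp (continuous_apply (j i))

lemma polyF_smul (ν0 : Measure (Fin K → ℝ)) {p : ℕ} (δ : Fin K → Fin V → ℝ)
    (x : Fin m → Fin V) (t : ℝ) :
    polyF ν0 m θ p (fun k ℓ => δ k ℓ / t) x = polyF ν0 m θ p δ x / t ^ p := by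
  unfold polyF
  rw [Finset.sum_div]
  refine Finset.sum_congr rfl fun S hS => ?_
  rw [Finset.sum_div]
  refine Finset.sum_congr rfl fun j _ => ?_
  have hcard : (Finset.univ : Finset {i // i ∈ S}).card = p := by
    rw [Finset.card_univ, Fintype.card_coe]
    exact (Finset.mem_powersetCard.1 hS).2
  rw [Finset.prod_div_distrib, Finset.prod_const, hcard, mul_div_assoc]

lemma norm1_eq_zero {δ : Fin K → Fin V → ℝ} (h : norm1 δ = 0) : δ = 0 := by
  funext k ℓ
  have h1 := (Finset.sum_eq_zero_iff_of_nonneg fun k _ =>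
    Finset.sum_nonneg fun ℓ _ => abs_nonneg (δ k ℓ)).1 h k (Finset.mem_univ k)
  have h2 := (Finset.sum_eq_zero_iff_of_nonneg fun ℓ _ => abs_nonneg (δ k ℓ)).1 h1 ℓ
    (Finset.mem_univ ℓ)
  simpa using abs_eq_zero.mp h2

lemma norm1_nonneg (δ : Fin K → Fin V → ℝ) : 0 ≤ norm1 δ :=
  Finset.sum_nonneg fun k _ => Finset.sum_nonneg fun ℓ _ => abs_nonneg _

lemma norm1_pos {δ : Fin K → Fin V → ℝ} (hδ : δ ≠ 0) : 0 < norm1 δ :=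
  lt_of_le_of_ne (norm1_nonneg δ) fun h => hδ (norm1_eq_zero h.symm)

def constrSet (V K : ℕ) : Set (Fin K → Fin V → ℝ) :=
  {δ | norm1 δ = 1 ∧ ∀ k, ∑ ℓ, δ k ℓ = 0}

lemma isCompact_constrSet : IsCompact (constrSet V K) := by
  have hclosed : IsClosed (constrSet V K) := by
    have h1 : IsClosed {δ : Fin K → Fin V → ℝ | norm1 δ = 1} := by
      have hc : Continuous (norm1 (V := V) (K := K)) :=
        continuous_finset_sum _ fun k _ => continuous_finset_sum _ fun ℓ _ =>
          ((continuous_apply ℓ).comp (continuous_apply k)).abs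
      exact isClosed_eq hc continuous_const
    have h2 : IsClosed {δ : Fin K → Fin V → ℝ | ∀ k, ∑ ℓ, δ k ℓ = 0} := by
      have : {δ : Fin K → Fin V → ℝ | ∀ k, ∑ ℓ, δ k ℓ = 0}
          = ⋂ k, {δ : Fin K → Fin V → ℝ | ∑ ℓ, δ k ℓ = 0} := by
        ext δ; simp [Set.mem_iInter]
      rw [this]
      refine isClosed_iInter fun k => isClosed_eq ?_ continuous_const
      exact continuous_finset_sum _ fun ℓ _ => (continuous_apply ℓ).comp (continuous_apply k)
    exact h1.inter h2
  have hsub : constrSet V K ⊆ Metric.closedBall 0 1 := by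
    intro δ hδ
    rw [Metric.mem_closedBall, dist_zero_right]
    rw [pi_norm_le_iff_of_nonneg zero_le_one]
    intro k
    rw [pi_norm_le_iff_of_nonneg zero_le_one]
    intro ℓ
    rw [Real.norm_eq_abs]
    calc |δ k ℓ| ≤ ∑ ℓ', |δ k ℓ'| :=
          Finset.single_le_sum (f := fun ℓ' => |δ k ℓ'|)
            (fun ℓ' _ => abs_nonneg _) (Finset.mem_univ ℓ)
      _ ≤ norm1 δ := Finset.single_le_sum
          (f := fun k' => ∑ ℓ', |δ k' ℓ'|)
          (fun k' _ => Finset.sum_nonneg fun ℓ' _ => abs_nonneg _) (Finset.mem_univ k)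
      _ = 1 := hδ.1
  exact (isCompact_closedBall 0 1).of_isClosed_subset hclosed hsub

lemma constrSet_nonempty (hV : 2 ≤ V) (hK : 2 ≤ K) : (constrSet V K).Nonempty := by
  classical
  have hV0 : 0 < V := by omega
  have hV1 : 1 < V := by omega
  have hK0 : 0 < K := by omega
  set a : Fin V := ⟨0, hV0⟩
  set b : Fin V := ⟨1, hV1⟩
  set k0 : Fin K := ⟨0, hK0⟩
  have hab : a ≠ b := by simp [a, b, Fin.ext_iff]
  set g : Fin V → ℝ := fun ℓ =>
    (if ℓ = a then (2:ℝ)⁻¹ else 0) - (if ℓ = b then (2:ℝ)⁻¹ else 0) with hg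
  refine ⟨fun k ℓ => if k = k0 then g ℓ else 0, ?_, ?_⟩
  · have habs : ∀ ℓ, |g ℓ| =
        (if ℓ = a then (2:ℝ)⁻¹ else 0) + (if ℓ = b then (2:ℝ)⁻¹ else 0) := by
      intro ℓ
      rcases eq_or_ne ℓ a with rfl | hℓa
      · simp [hg, hab, Ne.symm hab]
      · rcases eq_or_ne ℓ b with rfl | hℓb
        · simp [hg, hℓa]
        · simp [hg, hℓa, hℓb]
    have hsum : ∑ ℓ, |g ℓ| = 1 := by
      simp [habs, Finset.sum_add_distrib, Finset.sum_ite_eq']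
      norm_num
    unfold norm1
    rw [Finset.sum_eq_single k0]
    · simpa using hsum
    · intro k _ hk
      simp [hk]
    · simp
  · intro k
    rcases eq_or_ne k k0 with rfl | hk
    · simp [hg, Finset.sum_sub_distrib, Finset.sum_ite_eq']
    · simp [hk]

theorem main' (hV : 2 ≤ V) (hK : 2 ≤ K) (hm : 1 ≤ m) (hc0 : 0 < c0)
    (ν0 : Measure (Fin K → ℝ)) (hprob : IsProbabilityMeasure ν0)
    (hsupp : ν0 (simplex K)ᶜ = 0)
    (hθ : θ ∈ Theta c0 V K)
    (p : ℕ) (hp1 : 1 ≤ p) (hpm : p ≤ m) :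
    0 < degen ν0 m θ p ↔
      ∀ δ : Fin K → Fin V → ℝ,
        ((∀ x : Fin m → Fin V, polyF ν0 m θ p δ x = 0) ∧
          (∀ k : Fin K, ∑ ℓ, δ k ℓ = 0)) → δ = 0 := by
  classical
  have hkey : ∀ (δ : Fin K → Fin V → ℝ) (x : Fin m → Fin V),
      (∫ h, pDoc m θ h x * ∑ S ∈ Finset.powersetCard p (Finset.univ : Finset (Fin m)),
          ∏ i ∈ S, ((∑ k, h k * δ k (x i)) / pWord θ h (x i)) ∂ν0)
      = polyF ν0 m θ p δ x := fun δ x => key_integral ν0 hprob hsupp hc0 hθ p δ x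
  set G : (Fin K → Fin V → ℝ) → ℝ := fun δ => ∑ x : Fin m → Fin V, |polyF ν0 m θ p δ x|
    with hG
  have hGnonneg : ∀ δ, 0 ≤ G δ := fun δ => Finset.sum_nonneg fun x _ => abs_nonneg _
  have hset : degen ν0 m θ p = sInf (G '' constrSet V K) := by
    unfold degen
    congr 1
    ext r
    constructor
    · rintro ⟨δ, h1, h2, rfl⟩
      exact ⟨δ, ⟨h1, h2⟩, by simp only [hG, hkey]⟩
    · rintro ⟨δ, ⟨h1, h2⟩, rfl⟩
      exact ⟨δ, h1, h2, by simp only [hG, hkey]⟩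
  have hbdd : BddBelow (G '' constrSet V K) := by
    refine ⟨0, ?_⟩
    rintro r ⟨δ, _, rfl⟩
    exact hGnonneg δ
  rw [hset]
  constructor
  · rintro hpos δ ⟨hpoly, hrow⟩
    by_contra hδ
    have ht : 0 < norm1 δ := norm1_pos hδ
    set δ' : Fin K → Fin V → ℝ := fun k ℓ => δ k ℓ / norm1 δ with hδ'
    have h1' : norm1 δ' = 1 := by
      have e : ∀ k ℓ, |δ' k ℓ| = |δ k ℓ| / norm1 δ := fun k ℓ => by
        rw [hδ']
        simp only []
        rw [abs_div, abs_of_pos ht]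
      simp only [norm1, e, ← Finset.sum_div]
      exact div_self ht.ne'
    have h2' : ∀ k, ∑ ℓ, δ' k ℓ = 0 := fun k => by
      simp only [hδ', ← Finset.sum_div, hrow k, zero_div]
    have hG0 : G δ' = 0 := by
      simp only [hG, hδ', polyF_smul, hpoly]
      simp
    have hle : sInf (G '' constrSet V K) ≤ 0 :=
      csInf_le hbdd ⟨δ', ⟨h1', h2'⟩, hG0⟩
    linarith
  · intro hzero
    have hGcont : Continuous G :=
      continuous_finset_sum _ fun x _ => (continuous_polyF ν0 p x).abs
    have hcomp : IsCompact (G '' constrSet V K) := isCompact_constrSet.image hGcont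
    have hne : (G '' constrSet V K).Nonempty :=
      (constrSet_nonempty hV hK).image G
    obtain ⟨δ₀, hδ₀C, hmin⟩ := hcomp.sInf_mem hne
    rw [← hmin]
    have hne0 : G δ₀ ≠ 0 := by
      intro h0
      have hall : ∀ x : Fin m → Fin V, polyF ν0 m θ p δ₀ x = 0 := by
        intro x
        have := (Finset.sum_eq_zero_iff_of_nonneg fun x _ => abs_nonneg _).1 h0 x
          (Finset.mem_univ x)
        exact abs_eq_zero.mp this
      have hz := hzero δ₀ ⟨hall, hδ₀C.2⟩
      rw [hz] at hδ₀C
      have : norm1 (0 : Fin K → Fin V → ℝ) = 1 := hδ₀C.1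
      simp [norm1] at this
    exact lt_of_le_of_ne (hGnonneg δ₀) (Ne.symm hne0)

end AuxProp1

/-- **Proposition 1 (polynomial-system characterization of a positive degeneracy criterion).**
`𝔡_{m,p}(θ) > 0` if and only if the polynomial system
`Σ_{i₁<⋯<i_p} Σ_{j₁,…,j_p} ξ(i,j;θ,x) Π_t δ_{j_t,x_{i_t}} = 0` (for all `x ∈ [V]^m`) together
with `Σ_k δ_{jk} = 0` (for all `j`) has no non-zero solution `δ`. -/
theorem degen_pos_iff_poly_system
    {V K m : ℕ} (hV : 2 ≤ V) (hK : 2 ≤ K) (hm : 1 ≤ m) {c0 : ℝ} (hc0 : 0 < c0)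
    (ν0 : Measure (Fin K → ℝ)) (hprob : IsProbabilityMeasure ν0)
    (hsupp : ν0 (simplex K)ᶜ = 0)
    (θ : Fin K → Fin V → ℝ) (hθ : θ ∈ Theta c0 V K)
    (p : ℕ) (hp1 : 1 ≤ p) (hpm : p ≤ m) :
    0 < degen ν0 m θ p ↔
      ∀ δ : Fin K → Fin V → ℝ,
        ((∀ x : Fin m → Fin V,
            ∑ S ∈ Finset.powersetCard p (Finset.univ : Finset (Fin m)),
              ∑ j : {i // i ∈ S} → Fin K,
                (∫ h, (∏ i ∈ Sᶜ, pWord θ h (x i)) * ∏ i : {i // i ∈ S}, h (j i) ∂ν0) *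
                  ∏ i : {i // i ∈ S}, δ (j i) (x i.1) = 0) ∧
          (∀ k : Fin K, ∑ ℓ, δ k ℓ = 0)) → δ = 0 := by
  exact main' hV hK hm hc0 ν0 hprob hsupp hθ p hp1 hpm

end TopicModel
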